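/- For all reals κ′, κ with 1/2 < κ′ < κ < 1 there exists a constant C ≥ 1 (depending only on κ′ and κ) such that the following holds: for every η ∈ (0, 1/2] and all positive integers d, w, n with d ≤ w and n ≥ C·w/η, there exists a coupling of X ~ Binomial(n, 2κ′η) and Y ~ Binomial(n, κη) (a joint probability distribution on ℕ × ℕ with these two marginals) under which Pr[X/2 + w ≤ Y] ≥ 1 − e^{−d}. (That is, the distribution (1/2)·Binomial(n, 2κ′η) + w is (1 − e^{−d})-stochastically dominated by Binomial(n, κη).) -/

import Mathlib

open Real Finset

noncomputable def fR (n : ℕ) (p : ℝ) (j : ℕ) : ℝ :=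
  (n.choose j : ℝ) * p ^ j * (1 - p) ^ (n - j)

lemma fR_nonneg {n : ℕ} {p : ℝ} (hp0 : 0 ≤ p) (hp1 : p ≤ 1) (j : ℕ) : 0 ≤ fR n p j := by
  have h : (0:ℝ) ≤ 1 - p := by linarith
  unfold fR
  positivity

lemma fR_sum (n : ℕ) (p : ℝ) : ∑ j ∈ range (n+1), fR n p j = 1 := by
  have h := add_pow p (1 - p) n
  simp only [add_sub_cancel, one_pow] at h
  have h2 : ∑ j ∈ range (n+1), fR n p j
      = ∑ m ∈ range (n+1), p ^ m * (1-p) ^ (n-m) * (n.choose m : ℝ) :=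
    Finset.sum_congr rfl fun j _ => by unfold fR; ring
  rw [h2, ← h]

lemma exp_quad {t : ℝ} (h0 : 0 ≤ t) (h1 : t ≤ 1) : exp t ≤ 1 + t + t^2 := by
  have h := Real.exp_bound' h0 h1 (n := 2) (by norm_num)
  simp [Finset.sum_range_succ, Nat.factorial] at h
  nlinarith [sq_nonneg t]

lemma exp_neg_quad {t : ℝ} (h0 : 0 ≤ t) (h1 : t ≤ 1) : exp (-t) ≤ 1 - t + t^2 := by
  have h := Real.exp_bound (x := -t) (by rwa [abs_neg, abs_of_nonneg h0]) (n := 2) (by norm_num)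
  simp [Finset.sum_range_succ, Nat.factorial, abs_neg, abs_of_nonneg h0] at h
  rw [abs_sub_le_iff] at h
  nlinarith [h.1, sq_nonneg t]

lemma chernoff_upper (n : ℕ) (p t A : ℝ) (hp0 : 0 ≤ p) (hp1 : p ≤ 1) (ht : 0 ≤ t) :
    ∑ j ∈ (range (n+1)).filter (fun j : ℕ => A ≤ (j:ℝ)), fR n p j
      ≤ exp ((n:ℝ) * p * (exp t - 1) - t * A) := by
  have key : ∀ j ∈ (range (n+1)).filter (fun j : ℕ => A ≤ (j:ℝ)),
      fR n p j ≤ fR n p j * exp (t * ((j:ℝ) - A)) := by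
    intro j hj
    have hA : A ≤ (j:ℝ) := (Finset.mem_filter.1 hj).2
    nlinarith [fR_nonneg (n := n) hp0 hp1 j, Real.one_le_exp (by nlinarith : (0:ℝ) ≤ t * ((j:ℝ) - A))]
  calc ∑ j ∈ (range (n+1)).filter (fun j : ℕ => A ≤ (j:ℝ)), fR n p j
      ≤ ∑ j ∈ (range (n+1)).filter (fun j : ℕ => A ≤ (j:ℝ)), fR n p j * exp (t * ((j:ℝ) - A)) :=
        Finset.sum_le_sum key
    _ ≤ ∑ j ∈ range (n+1), fR n p j * exp (t * ((j:ℝ) - A)) := by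
        apply Finset.sum_le_sum_of_subset_of_nonneg (Finset.filter_subset _ _)
        intro j _ _
        exact mul_nonneg (fR_nonneg hp0 hp1 j) (Real.exp_nonneg _)
    _ = exp (-(t*A)) * ∑ j ∈ range (n+1), (n.choose j : ℝ) * (p * exp t) ^ j * (1-p) ^ (n-j) := by
        rw [Finset.mul_sum]
        refine Finset.sum_congr rfl fun j _ => ?_
        have e1 : exp (t * ((j:ℝ) - A)) = exp (t*(j:ℝ)) * exp (-(t*A)) := by
          rw [← Real.exp_add]; ring_nf
        have e2 : (p * exp t)^j = p^j * exp (t*(j:ℝ)) := by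
          rw [mul_pow, ← Real.exp_nat_mul, mul_comm t (j:ℝ)]
        unfold fR
        rw [e1, e2]
        ring
    _ = exp (-(t*A)) * (p * exp t + (1 - p)) ^ n := by
        rw [add_pow]
        congr 1
        exact Finset.sum_congr rfl fun j _ => by ring
    _ ≤ exp (-(t*A)) * exp ((n:ℝ) * p * (exp t - 1)) := by
        apply mul_le_mul_of_nonneg_left _ (Real.exp_nonneg _)
        have h1 : p * exp t + (1 - p) = 1 + p * (exp t - 1) := by ring
        have h2 : (0:ℝ) ≤ p * exp t + (1 - p) := by
          have := Real.exp_nonneg t; nlinarith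
        calc (p * exp t + (1 - p)) ^ n ≤ (exp (p * (exp t - 1))) ^ n := by
              apply pow_le_pow_left₀ h2
              rw [h1]
              linarith [Real.add_one_le_exp (p * (exp t - 1))]
          _ = exp ((n:ℝ) * (p * (exp t - 1))) := by rw [← Real.exp_nat_mul]
          _ = exp ((n:ℝ) * p * (exp t - 1)) := by ring_nf
    _ = exp ((n:ℝ) * p * (exp t - 1) - t * A) := by rw [← Real.exp_add]; ring_nf

lemma chernoff_lower (n : ℕ) (p t B : ℝ) (hp0 : 0 ≤ p) (hp1 : p ≤ 1) (ht : 0 ≤ t) :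
    ∑ j ∈ (range (n+1)).filter (fun j : ℕ => (j:ℝ) ≤ B), fR n p j
      ≤ exp (t * B + (n:ℝ) * p * (exp (-t) - 1)) := by
  have key : ∀ j ∈ (range (n+1)).filter (fun j : ℕ => (j:ℝ) ≤ B),
      fR n p j ≤ fR n p j * exp (t * (B - (j:ℝ))) := by
    intro j hj
    have hB : (j:ℝ) ≤ B := (Finset.mem_filter.1 hj).2
    nlinarith [fR_nonneg (n := n) hp0 hp1 j, Real.one_le_exp (by nlinarith : (0:ℝ) ≤ t * (B - (j:ℝ)))]
  calc ∑ j ∈ (range (n+1)).filter (fun j : ℕ => (j:ℝ) ≤ B), fR n p j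
      ≤ ∑ j ∈ (range (n+1)).filter (fun j : ℕ => (j:ℝ) ≤ B), fR n p j * exp (t * (B - (j:ℝ))) :=
        Finset.sum_le_sum key
    _ ≤ ∑ j ∈ range (n+1), fR n p j * exp (t * (B - (j:ℝ))) := by
        apply Finset.sum_le_sum_of_subset_of_nonneg (Finset.filter_subset _ _)
        intro j _ _
        exact mul_nonneg (fR_nonneg hp0 hp1 j) (Real.exp_nonneg _)
    _ = exp (t*B) * ∑ j ∈ range (n+1), (n.choose j : ℝ) * (p * exp (-t)) ^ j * (1-p) ^ (n-j) := by
        rw [Finset.mul_sum]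
        refine Finset.sum_congr rfl fun j _ => ?_
        have e1 : exp (t * (B - (j:ℝ))) = exp (t*B) * exp (-(t*(j:ℝ))) := by
          rw [← Real.exp_add]; ring_nf
        have e2 : (p * exp (-t))^j = p^j * exp (-(t*(j:ℝ))) := by
          rw [mul_pow, ← Real.exp_nat_mul]
          congr 2
          ring
        unfold fR
        rw [e1, e2]
        ring
    _ = exp (t*B) * (p * exp (-t) + (1 - p)) ^ n := by
        rw [add_pow]
        congr 1
        exact Finset.sum_congr rfl fun j _ => by ring
    _ ≤ exp (t*B) * exp ((n:ℝ) * p * (exp (-t) - 1)) := by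
        apply mul_le_mul_of_nonneg_left _ (Real.exp_nonneg _)
        have h2 : (0:ℝ) ≤ p * exp (-t) + (1 - p) := by
          have := Real.exp_nonneg (-t); nlinarith
        calc (p * exp (-t) + (1 - p)) ^ n ≤ (exp (p * (exp (-t) - 1))) ^ n := by
              apply pow_le_pow_left₀ h2
              have := Real.add_one_le_exp (p * (exp (-t) - 1))
              linarith
          _ = exp ((n:ℝ) * (p * (exp (-t) - 1))) := by rw [← Real.exp_nat_mul]
          _ = exp ((n:ℝ) * p * (exp (-t) - 1)) := by ring_nf
    _ = exp (t * B + (n:ℝ) * p * (exp (-t) - 1)) := by rw [← Real.exp_add]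

open scoped ENNReal

/-- The `Binomial(n, p)` probability of the outcome `j`. -/
noncomputable def binomProb (n : ℕ) (p : ℝ) (j : ℕ) : ℝ≥0∞ :=
  (n.choose j : ℝ≥0∞) * ENNReal.ofReal p ^ j * ENNReal.ofReal (1 - p) ^ (n - j)

lemma binomProb_eq (n : ℕ) {p : ℝ} (hp0 : 0 ≤ p) (hp1 : p ≤ 1) (j : ℕ) :
    binomProb n p j = ENNReal.ofReal (fR n p j) := by
  unfold binomProb fR
  have h1 : (0:ℝ) ≤ 1 - p := by linarith
  rw [ENNReal.ofReal_mul (by positivity), ENNReal.ofReal_mul (by positivity),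
    ENNReal.ofReal_pow hp0, ENNReal.ofReal_pow h1, ENNReal.ofReal_natCast]

lemma binomProb_zero {n j : ℕ} (p : ℝ) (h : n < j) : binomProb n p j = 0 := by
  simp [binomProb, Nat.choose_eq_zero_of_lt h]

lemma tsum_binom_indicator (n : ℕ) {p : ℝ} (hp0 : 0 ≤ p) (hp1 : p ≤ 1) (S : Set ℕ) :
    ∑' j : ℕ, S.indicator (binomProb n p) j
      = ENNReal.ofReal (∑ j ∈ range (n+1), S.indicator (fR n p) j) := by
  classical
  rw [tsum_eq_sum (s := range (n+1))
    (fun j hj => by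
      have hn : n < j := by
        simpa using (Finset.mem_range.not.mp hj)
      simp [Set.indicator_apply, binomProb_zero p hn])]
  rw [ENNReal.ofReal_sum_of_nonneg
    (fun j _ => Set.indicator_nonneg (fun i _ => fR_nonneg hp0 hp1 i) j)]
  refine Finset.sum_congr rfl fun j _ => ?_
  by_cases h : j ∈ S
  · rw [Set.indicator_of_mem h, Set.indicator_of_mem h, binomProb_eq n hp0 hp1]
  · rw [Set.indicator_of_notMem h, Set.indicator_of_notMem h, ENNReal.ofReal_zero]

lemma tsum_binom (n : ℕ) {p : ℝ} (hp0 : 0 ≤ p) (hp1 : p ≤ 1) :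
    ∑' j : ℕ, binomProb n p j = 1 := by
  have h := tsum_binom_indicator n hp0 hp1 Set.univ
  simpa [Set.indicator_univ, fR_sum n p] using h

noncomputable def couplePMF (n : ℕ) (p q : ℝ) (hp0 : 0 ≤ p) (hp1 : p ≤ 1)
    (hq0 : 0 ≤ q) (hq1 : q ≤ 1) : PMF (ℕ × ℕ) :=
  ⟨fun x => binomProb n p x.1 * binomProb n q x.2, by
    have h : ∑' x : ℕ × ℕ, binomProb n p x.1 * binomProb n q x.2 = 1 := by
      rw [ENNReal.tsum_prod']
      have h1 : ∀ i : ℕ, ∑' j : ℕ, binomProb n p i * binomProb n q j = binomProb n p i := by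
        intro i
        rw [ENNReal.tsum_mul_left, tsum_binom n hq0 hq1, mul_one]
      rw [tsum_congr h1, tsum_binom n hp0 hp1]
    exact h ▸ ENNReal.summable.hasSum⟩

lemma couplePMF_apply (n : ℕ) (p q : ℝ) (hp0 : 0 ≤ p) (hp1 : p ≤ 1)
    (hq0 : 0 ≤ q) (hq1 : q ≤ 1) (x : ℕ × ℕ) :
    couplePMF n p q hp0 hp1 hq0 hq1 x = binomProb n p x.1 * binomProb n q x.2 := rfl

lemma couplePMF_fst (n : ℕ) (p q : ℝ) (hp0 : 0 ≤ p) (hp1 : p ≤ 1)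
    (hq0 : 0 ≤ q) (hq1 : q ≤ 1) (a : ℕ) :
    (couplePMF n p q hp0 hp1 hq0 hq1).map Prod.fst a = binomProb n p a := by
  rw [PMF.map_apply, ENNReal.tsum_prod']
  rw [tsum_eq_single a (fun b hb => by simp [Ne.symm hb])]
  refine (tsum_congr fun j => ?_).trans
    (by rw [ENNReal.tsum_mul_left, tsum_binom n hq0 hq1, mul_one] :
      (∑' j : ℕ, binomProb n p a * binomProb n q j) = binomProb n p a)
  simp [couplePMF_apply]

lemma couplePMF_snd (n : ℕ) (p q : ℝ) (hp0 : 0 ≤ p) (hp1 : p ≤ 1)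
    (hq0 : 0 ≤ q) (hq1 : q ≤ 1) (b : ℕ) :
    (couplePMF n p q hp0 hp1 hq0 hq1).map Prod.snd b = binomProb n q b := by
  rw [PMF.map_apply, ENNReal.tsum_prod']
  refine (tsum_congr fun i => ?_).trans
    (by rw [ENNReal.tsum_mul_right, tsum_binom n hp0 hp1, one_mul] :
      (∑' i : ℕ, binomProb n p i * binomProb n q b) = binomProb n q b)
  rw [tsum_eq_single b (fun c hc => by simp [Ne.symm hc])]
  simp [couplePMF_apply]

lemma prod_indicator_tsum (f g : ℕ → ℝ≥0∞) (Sx Sy : Set ℕ) :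
    ∑' x : ℕ × ℕ, (Sx ×ˢ Sy : Set (ℕ × ℕ)).indicator (fun x => f x.1 * g x.2) x
      = (∑' i : ℕ, Sx.indicator f i) * (∑' j : ℕ, Sy.indicator g j) := by
  rw [ENNReal.tsum_prod']
  have h1 : ∀ i : ℕ, (∑' j : ℕ, (Sx ×ˢ Sy : Set (ℕ × ℕ)).indicator
      (fun x => f x.1 * g x.2) (i, j)) = Sx.indicator f i * ∑' j : ℕ, Sy.indicator g j := by
    intro i
    rw [← ENNReal.tsum_mul_left]
    refine tsum_congr fun j => ?_
    by_cases hi : i ∈ Sx <;> by_cases hj : j ∈ Sy <;>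
      simp [Set.indicator_apply, Set.mem_prod, hi, hj]
  exact (tsum_congr h1).trans (by rw [ENNReal.tsum_mul_right])
set_option maxHeartbeats 1000000 in
/-- For all `1/2 < κ' < κ < 1` there is a constant `C ≥ 1` such that
for all `η ∈ (0, 1/2]` and all positive integers `d ≤ w` and `n ≥ C·w/η`, there is a
coupling `ν` of `X ~ Binomial(n, 2κ'η)` and `Y ~ Binomial(n, κη)` under which
`Pr[X/2 + w ≤ Y] ≥ 1 − e^{−d}`; that is, `(1/2)·Binomial(n, 2κ'η) + w` is
`(1 − e^{−d})`-stochastically dominated by `Binomial(n, κη)`. -/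
theorem half_binomial_plus_w_dominated
    (κ' κ : ℝ) (h1 : 1 / 2 < κ') (h2 : κ' < κ) (h3 : κ < 1) :
    ∃ C : ℝ, 1 ≤ C ∧
      ∀ (η : ℝ), 0 < η → η ≤ 1 / 2 →
      ∀ (d w n : ℕ), 0 < d → 0 < w → 0 < n → d ≤ w → C * w / η ≤ n →
      ∃ ν : PMF (ℕ × ℕ),
        (∀ a : ℕ, ν.map Prod.fst a = binomProb n (2 * κ' * η) a) ∧
        (∀ b : ℕ, ν.map Prod.snd b = binomProb n (κ * η) b) ∧
        ENNReal.ofReal (1 - Real.exp (-(d : ℝ))) ≤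
          ν.toOuterMeasure {p : ℕ × ℕ | (p.1 : ℝ) / 2 + (w : ℝ) ≤ (p.2 : ℝ)} := by
  obtain ⟨δ, hδdef⟩ : ∃ x : ℝ, x = κ - κ' := ⟨_, rfl⟩
  have hδ : 0 < δ := by rw [hδdef]; linarith
  have hδhalf : δ < 1/2 := by rw [hδdef]; linarith
  refine ⟨2/δ + 512/δ^2, ?_, ?_⟩
  · have hle : (1:ℝ) ≤ 512/δ^2 := by
      rw [le_div_iff₀ (by positivity)]
      nlinarith
    have h2' : (0:ℝ) ≤ 2/δ := by positivity
    linarith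
  intro η hη hη2 d w n hd hw hn hdw hCn
  obtain ⟨p1, hp1def⟩ : ∃ x : ℝ, x = 2 * κ' * η := ⟨_, rfl⟩
  obtain ⟨p2, hp2def⟩ : ∃ x : ℝ, x = κ * η := ⟨_, rfl⟩
  have hp10 : 0 ≤ p1 := by rw [hp1def]; nlinarith
  have hp11 : p1 ≤ 1 := by rw [hp1def]; nlinarith
  have hp20 : 0 ≤ p2 := by rw [hp2def]; nlinarith
  have hp21 : p2 ≤ 1 := by rw [hp2def]; nlinarith
  rw [← hp1def, ← hp2def]
  refine ⟨couplePMF n p1 p2 hp10 hp11 hp20 hp21,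
    couplePMF_fst n p1 p2 hp10 hp11 hp20 hp21,
    couplePMF_snd n p1 p2 hp10 hp11 hp20 hp21, ?_⟩
  classical
  obtain ⟨m, hmdef⟩ : ∃ x : ℝ, x = η * n := ⟨_, rfl⟩
  have hm : 0 < m := by
    rw [hmdef]; exact mul_pos hη (by exact_mod_cast hn)
  have hCw : (2/δ + 512/δ^2) * w ≤ m := by
    rw [div_le_iff₀ hη] at hCn
    rw [hmdef]; linarith [hCn]
  have hw1 : (1:ℝ) ≤ (w:ℝ) := by exact_mod_cast hw
  have hdww : (d:ℝ) ≤ (w:ℝ) := by exact_mod_cast hdw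
  have hwpos : (0:ℝ) < w := by linarith
  have hmw2a : (2/δ) * w ≤ m := by nlinarith [hCw, (by positivity : (0:ℝ) ≤ (512/δ^2) * w)]
  have hmw2b : (512/δ^2) * w ≤ m := by nlinarith [hCw, (by positivity : (0:ℝ) ≤ (2/δ) * w)]
  obtain ⟨t, htdef⟩ : ∃ x : ℝ, x = δ/8 := ⟨_, rfl⟩
  have ht0 : 0 ≤ t := by rw [htdef]; positivity
  have ht1 : t ≤ 1 := by rw [htdef]; linarith
  obtain ⟨Δ, hΔdef⟩ : ∃ x : ℝ, x = δ * m / 2 := ⟨_, rfl⟩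
  obtain ⟨A, hAdef⟩ : ∃ x : ℝ, x = n * p1 + Δ := ⟨_, rfl⟩
  obtain ⟨B, hBdef⟩ : ∃ x : ℝ, x = n * p2 - Δ/2 := ⟨_, rfl⟩
  obtain ⟨c, hcdef⟩ : ∃ x : ℝ, x = δ^2/256 := ⟨_, rfl⟩
  obtain ⟨ε, hεdef⟩ : ∃ x : ℝ, x = Real.exp (-(c*m)) := ⟨_, rfl⟩
  have hε0 : 0 ≤ ε := hεdef ▸ Real.exp_nonneg _
  have hε1 : ε ≤ 1 := by
    rw [hεdef]
    refine Real.exp_le_one_iff.mpr ?_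
    rw [hcdef]; nlinarith
  obtain ⟨Sx, hSx⟩ : ∃ S : Set ℕ, S = {i : ℕ | (i:ℝ) ≤ A} := ⟨_, rfl⟩
  obtain ⟨Sy, hSy⟩ : ∃ S : Set ℕ, S = {j : ℕ | B ≤ (j:ℝ)} := ⟨_, rfl⟩
  have hnp1 : (n:ℝ) * p1 = 2 * κ' * m := by rw [hp1def, hmdef]; ring
  have hnp2 : (n:ℝ) * p2 = κ * m := by rw [hp2def, hmdef]; ring
  have hnp1ge : 0 ≤ (n:ℝ) * p1 := by rw [hnp1]; nlinarith
  have hnp1le : (n:ℝ) * p1 ≤ 2 * m := by rw [hnp1]; nlinarith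
  have hnp2ge : 0 ≤ (n:ℝ) * p2 := by rw [hnp2]; nlinarith
  have hnp2le : (n:ℝ) * p2 ≤ m := by rw [hnp2]; nlinarith
  have hwΔ : (w:ℝ) ≤ Δ := by
    rw [hΔdef]
    rw [div_mul_eq_mul_div, div_le_iff₀ hδ] at hmw2a
    nlinarith [hmw2a]
  have h2Δ : 2 * Δ = (κ - κ') * m := by rw [hΔdef, hδdef]; ring
  have hAB : A/2 + (w:ℝ) ≤ B := by
    rw [hAdef, hBdef, hnp1, hnp2]
    linarith [hwΔ, h2Δ]
  have hsub : (Sx ×ˢ Sy : Set (ℕ × ℕ)) ⊆ {p : ℕ × ℕ | (p.1 : ℝ) / 2 + (w : ℝ) ≤ (p.2 : ℝ)} := by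
    rintro ⟨i, j⟩ ⟨hi, hj⟩
    rw [hSx] at hi; rw [hSy] at hj
    simp only [Set.mem_setOf_eq] at hi hj ⊢
    calc (i:ℝ)/2 + (w:ℝ) ≤ A/2 + w := by linarith
      _ ≤ B := hAB
      _ ≤ (j:ℝ) := hj
  -- tail bounds (real)
  have htailx : ∑ j ∈ Finset.range (n+1), Sxᶜ.indicator (fR n p1) j ≤ ε := by
    calc ∑ j ∈ Finset.range (n+1), Sxᶜ.indicator (fR n p1) j
        ≤ ∑ j ∈ Finset.range (n+1), (if A ≤ (j:ℝ) then fR n p1 j else 0) := by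
          refine Finset.sum_le_sum fun j _ => ?_
          by_cases hj : j ∈ Sxᶜ
          · have hj' : A ≤ (j:ℝ) := by
              rw [hSx] at hj
              have := hj
              simp only [Set.mem_compl_iff, Set.mem_setOf_eq, not_le] at this
              linarith
            rw [Set.indicator_of_mem hj, if_pos hj']
          · rw [Set.indicator_of_notMem hj]
            split
            · exact fR_nonneg hp10 hp11 j
            · exact le_refl 0
      _ = ∑ j ∈ (Finset.range (n+1)).filter (fun j : ℕ => A ≤ (j:ℝ)), fR n p1 j :=
          (Finset.sum_filter _ _).symm
      _ ≤ Real.exp ((n:ℝ) * p1 * (Real.exp t - 1) - t * A) :=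
          chernoff_upper n p1 t A hp10 hp11 ht0
      _ ≤ ε := by
          rw [hεdef, Real.exp_le_exp]
          have e1 : Real.exp t ≤ 1 + t + t^2 := exp_quad ht0 ht1
          have h5 : (n:ℝ)*p1*(Real.exp t - 1 - t) ≤ ((n:ℝ)*p1)*t^2 :=
            mul_le_mul_of_nonneg_left (by linarith) hnp1ge
          have h6 : ((n:ℝ)*p1)*t^2 ≤ 2*m*t^2 :=
            mul_le_mul_of_nonneg_right hnp1le (sq_nonneg t)
          rw [hAdef, hcdef]
          rw [htdef] at h5 h6 ⊢
          rw [hΔdef]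
          linarith [h5, h6, mul_nonneg (sq_nonneg δ) hm.le]
  have htaily : ∑ j ∈ Finset.range (n+1), Syᶜ.indicator (fR n p2) j ≤ ε := by
    calc ∑ j ∈ Finset.range (n+1), Syᶜ.indicator (fR n p2) j
        ≤ ∑ j ∈ Finset.range (n+1), (if (j:ℝ) ≤ B then fR n p2 j else 0) := by
          refine Finset.sum_le_sum fun j _ => ?_
          by_cases hj : j ∈ Syᶜ
          · have hj' : (j:ℝ) ≤ B := by
              rw [hSy] at hj
              have := hj
              simp only [Set.mem_compl_iff, Set.mem_setOf_eq, not_le] at this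
              linarith
            rw [Set.indicator_of_mem hj, if_pos hj']
          · rw [Set.indicator_of_notMem hj]
            split
            · exact fR_nonneg hp20 hp21 j
            · exact le_refl 0
      _ = ∑ j ∈ (Finset.range (n+1)).filter (fun j : ℕ => (j:ℝ) ≤ B), fR n p2 j :=
          (Finset.sum_filter _ _).symm
      _ ≤ Real.exp (t * B + (n:ℝ) * p2 * (Real.exp (-t) - 1)) :=
          chernoff_lower n p2 t B hp20 hp21 ht0
      _ ≤ ε := by
          rw [hεdef, Real.exp_le_exp]
          have e2 : Real.exp (-t) ≤ 1 - t + t^2 := exp_neg_quad ht0 ht1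
          have h5 : (n:ℝ)*p2*(Real.exp (-t) - 1 + t) ≤ ((n:ℝ)*p2)*t^2 :=
            mul_le_mul_of_nonneg_left (by linarith) hnp2ge
          have h6 : ((n:ℝ)*p2)*t^2 ≤ m*t^2 :=
            mul_le_mul_of_nonneg_right hnp2le (sq_nonneg t)
          rw [hBdef, hcdef]
          rw [htdef] at h5 h6 ⊢
          rw [hΔdef]
          linarith [h5, h6, mul_nonneg (sq_nonneg δ) hm.le]
  -- factor lower bounds
  have hfacx : 1 - ENNReal.ofReal ε ≤ ∑' i : ℕ, Sx.indicator (binomProb n p1) i := by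
    have hsplit : (∑' i : ℕ, Sx.indicator (binomProb n p1) i)
        + ∑' i : ℕ, Sxᶜ.indicator (binomProb n p1) i = 1 := by
      rw [← ENNReal.tsum_add]
      exact (tsum_congr fun i =>
        congrFun (Set.indicator_self_add_compl Sx (binomProb n p1)) i).trans
        (tsum_binom n hp10 hp11)
    have htail : ∑' i : ℕ, Sxᶜ.indicator (binomProb n p1) i ≤ ENNReal.ofReal ε := by
      rw [tsum_binom_indicator n hp10 hp11 Sxᶜ]
      exact ENNReal.ofReal_le_ofReal htailx
    rw [tsub_le_iff_right]
    calc (1:ℝ≥0∞) = _ + _ := hsplit.symm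
      _ ≤ _ + ENNReal.ofReal ε := add_le_add_right htail _
  have hfacy : 1 - ENNReal.ofReal ε ≤ ∑' j : ℕ, Sy.indicator (binomProb n p2) j := by
    have hsplit : (∑' j : ℕ, Sy.indicator (binomProb n p2) j)
        + ∑' j : ℕ, Syᶜ.indicator (binomProb n p2) j = 1 := by
      rw [← ENNReal.tsum_add]
      exact (tsum_congr fun j =>
        congrFun (Set.indicator_self_add_compl Sy (binomProb n p2)) j).trans
        (tsum_binom n hp20 hp21)
    have htail : ∑' j : ℕ, Syᶜ.indicator (binomProb n p2) j ≤ ENNReal.ofReal ε := by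
      rw [tsum_binom_indicator n hp20 hp21 Syᶜ]
      exact ENNReal.ofReal_le_ofReal htaily
    rw [tsub_le_iff_right]
    calc (1:ℝ≥0∞) = _ + _ := hsplit.symm
      _ ≤ _ + ENNReal.ofReal ε := add_le_add_right htail _
  -- measure of the product event
  have hmeas : (∑' i : ℕ, Sx.indicator (binomProb n p1) i)
      * (∑' j : ℕ, Sy.indicator (binomProb n p2) j)
      ≤ (couplePMF n p1 p2 hp10 hp11 hp20 hp21).toOuterMeasure
          {p : ℕ × ℕ | (p.1 : ℝ) / 2 + (w : ℝ) ≤ (p.2 : ℝ)} := by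
    rw [← prod_indicator_tsum]
    calc ∑' x : ℕ × ℕ, (Sx ×ˢ Sy : Set (ℕ × ℕ)).indicator
          (fun x => binomProb n p1 x.1 * binomProb n p2 x.2) x
        = (couplePMF n p1 p2 hp10 hp11 hp20 hp21).toOuterMeasure (Sx ×ˢ Sy) := by
          rw [PMF.toOuterMeasure_apply]
          exact tsum_congr fun x => rfl
      _ ≤ _ := (couplePMF n p1 p2 hp10 hp11 hp20 hp21).toOuterMeasure.mono hsub
  -- 2ε ≤ exp(-d)
  have hεd : 2 * ε ≤ Real.exp (-(d:ℝ)) := by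
    have hcm : (d:ℝ) + Real.log 2 ≤ c * m := by
      have hcm2 : 2 * (w:ℝ) ≤ c * m := by
        rw [div_mul_eq_mul_div, div_le_iff₀ (by positivity : (0:ℝ) < δ^2)] at hmw2b
        rw [hcdef]
        linarith [hmw2b]
      have hlog2 : Real.log 2 ≤ 1 := by
        have := Real.log_le_sub_one_of_pos (by norm_num : (0:ℝ) < 2)
        linarith
      linarith
    have hee : ε ≤ Real.exp (-(d:ℝ) - Real.log 2) := by
      rw [hεdef, Real.exp_le_exp]
      linarith
    have h2 : Real.exp (-(d:ℝ) - Real.log 2) = Real.exp (-(d:ℝ)) / 2 := by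
      rw [Real.exp_sub, Real.exp_log (by norm_num : (0:ℝ) < 2)]
    rw [h2] at hee
    linarith
  -- final chain
  calc ENNReal.ofReal (1 - Real.exp (-(d:ℝ)))
      ≤ ENNReal.ofReal ((1-ε) * (1-ε)) := by
        apply ENNReal.ofReal_le_ofReal
        nlinarith [hε0]
    _ = ENNReal.ofReal (1-ε) * ENNReal.ofReal (1-ε) := ENNReal.ofReal_mul (by linarith)
    _ = (1 - ENNReal.ofReal ε) * (1 - ENNReal.ofReal ε) := by
        rw [ENNReal.ofReal_sub 1 hε0, ENNReal.ofReal_one]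
    _ ≤ (∑' i : ℕ, Sx.indicator (binomProb n p1) i)
        * (∑' j : ℕ, Sy.indicator (binomProb n p2) j) := mul_le_mul' hfacx hfacy
    _ ≤ _ := hmeas
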